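/- Let T > 0, ω := 2π/T, and let a, p, q : ℤ → ℂ with a and p square-summable and conj(a(k)) = a(−k) for all k (real symbol). Assume the scalar symbol harmonic Lyapunov equation holds: for every k ∈ ℤ, 2·Σ_{r∈ℤ} a(k−r)·p(r) + i·ω·k·p(k) + q(k) = 0. Fix m ∈ ℕ and let A_m, N_m, Q_m, 𝒫_m be the (2m+1)×(2m+1) matrices indexed by i, j ∈ {−m,…,m} with (A_m)_{ij} = a(i−j), (N_m)_{ij} = i·ω·i·δ_{ij}, (Q_m)_{ij} = q(i−j), (𝒫_m)_{ij} = p(i−j). If P_m is any (2m+1)×(2m+1) complex matrix satisfying the truncated harmonic Lyapunov equation (A_m − N_m)^* P_m + P_m (A_m − N_m) + Q_m = 0, then ΔP := P_m − 𝒫_m satisfies, for all i, j with |i|, |j| ≤ m: ((A_m − N_m)^* ΔP + ΔP (A_m − N_m))_{ij} = Σ_{|r| > m} ( a(i−r)·p(r−j) + p(i−r)·a(r−j) ). In particular the solution of the truncated Lyapunov equation equals the truncation of the Toeplitz solution plus a correction term governed by Hankel tail sums. -/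

import Mathlib

open Matrix

/-- The solution `P_m` of the truncated harmonic Lyapunov equation differs from the `m`-truncation
`𝒫_m` of the Toeplitz solution by a correction `ΔP = P_m − 𝒫_m` whose Lyapunov image is given by
Hankel tail sums: for all `i, j`,
`((A_m − N_m)^* ΔP + ΔP (A_m − N_m))_{ij} = Σ_{|r|>m} (a(i−r)p(r−j) + p(i−r)a(r−j))`. -/
private theorem tlc_shiftL (a : ℤ → ℂ) (ha : Summable fun k => ‖a k‖ ^ 2) (c : ℤ) :
    Summable fun r => ‖a (c - r)‖ ^ 2 :=
  (Equiv.summable_iff (Equiv.subLeft c) (f := fun k => ‖a k‖ ^ 2)).2 ha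

private theorem tlc_shiftR (a : ℤ → ℂ) (ha : Summable fun k => ‖a k‖ ^ 2) (c : ℤ) :
    Summable fun r => ‖a (r - c)‖ ^ 2 :=
  (Equiv.summable_iff (Equiv.subRight c) (f := fun k => ‖a k‖ ^ 2)).2 ha

private theorem tlc_prodSummable (a p : ℤ → ℂ) (ha : Summable fun k => ‖a k‖ ^ 2)
    (hp : Summable fun k => ‖p k‖ ^ 2) (I J : ℤ) :
    Summable fun r : ℤ => a (I - r) * p (r - J) := by
  apply Summable.of_norm
  have hA := tlc_shiftL a ha I
  have hB := tlc_shiftR p hp J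
  apply Summable.of_nonneg_of_le (fun r => norm_nonneg _)
    (fun r => ?_) ((hA.add hB).div_const 2)
  rw [norm_mul]
  nlinarith [norm_nonneg (a (I - r)), norm_nonneg (p (r - J)),
    sq_nonneg (‖a (I - r)‖ - ‖p (r - J)‖)]

private theorem tlc_reindex1 (a p : ℤ → ℂ) (I J : ℤ) :
    ∑' K : ℤ, a (I - K) * p (K - J) = ∑' r : ℤ, a ((I - J) - r) * p r := by
  calc ∑' K : ℤ, a (I - K) * p (K - J)
      = ∑' K : ℤ, (fun r => a ((I - J) - r) * p r) ((Equiv.subRight J) K) := by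
        apply tsum_congr; intro K
        have h : (I - J) - (K - J) = I - K := by ring
        simp only [Equiv.subRight_apply, h]
    _ = _ := Equiv.tsum_eq (Equiv.subRight J) (fun r => a ((I - J) - r) * p r)

private theorem tlc_reindex2 (a p : ℤ → ℂ) (I J : ℤ) :
    ∑' K : ℤ, p (I - K) * a (K - J) = ∑' r : ℤ, a ((I - J) - r) * p r := by
  calc ∑' K : ℤ, p (I - K) * a (K - J)
      = ∑' K : ℤ, (fun r => a ((I - J) - r) * p r) ((Equiv.subLeft I) K) := by
        apply tsum_congr; intro K
        have h : (I - J) - (I - K) = K - J := by ring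
        simp only [Equiv.subLeft_apply, h]
        ring
    _ = _ := Equiv.tsum_eq (Equiv.subLeft I) (fun r => a ((I - J) - r) * p r)

private theorem tlc_finsum (m : ℕ) (g : ℤ → ℂ) :
    ∑ k : Fin (2 * m + 1), g ((k : ℤ) - m)
      = ∑ r ∈ Finset.Icc (-(m : ℤ)) m, g r := by
  refine Finset.sum_nbij' (i := fun k : Fin (2 * m + 1) => (k : ℤ) - m)
    (j := fun r => (⟨min (r + m).toNat (2 * m), by omega⟩ : Fin (2 * m + 1)))
    ?_ ?_ ?_ ?_ ?_
  · intro k _; simp [Finset.mem_Icc]; omega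
  · intro r _; simp
  · intro k _; have hk := k.isLt; ext; simp; omega
  · intro r hr; simp at hr ⊢; omega
  · intro k _; rfl

private theorem tlc_tail (m : ℕ) (g : ℤ → ℂ) (hg : Summable g) :
    ∑' r : {r : ℤ // (m : ℤ) < |r|}, g r
      = ∑' r : ℤ, g r - ∑ r ∈ Finset.Icc (-(m : ℤ)) m, g r := by
  have h := Summable.sum_add_tsum_subtype_compl hg (Finset.Icc (-(m : ℤ)) m)
  have hiff : ∀ x : ℤ, (m : ℤ) < |x| ↔ x ∉ Finset.Icc (-(m : ℤ)) m := by
    intro x; simp [Finset.mem_Icc, lt_abs]; omega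
  have he : ∑' r : {r : ℤ // (m : ℤ) < |r|}, g r
      = ∑' r : {x : ℤ // x ∉ Finset.Icc (-(m : ℤ)) m}, g r :=
    (Equiv.subtypeEquivRight hiff).tsum_eq
      (fun x : {x : ℤ // x ∉ Finset.Icc (-(m : ℤ)) m} => g x)
  rw [he, eq_sub_iff_add_eq, add_comm]; exact h

theorem truncated_lyapunov_correction
    (T : ℝ) (hT : 0 < T) (ω : ℝ) (hω : ω = 2 * Real.pi / T)
    (a p q : ℤ → ℂ)
    (ha2 : Summable fun k => ‖a k‖ ^ 2) (hp2 : Summable fun k => ‖p k‖ ^ 2)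
    (hsym : ∀ k : ℤ, (starRingEnd ℂ) (a k) = a (-k))
    (hLyap : ∀ k : ℤ, 2 * (∑' r : ℤ, a (k - r) * p r)
      + Complex.I * ω * k * p k + q k = 0)
    (m : ℕ)
    (Am Nm Qm Pm P : Matrix (Fin (2 * m + 1)) (Fin (2 * m + 1)) ℂ)
    (hAm : ∀ i j, Am i j = a (((i : ℤ) - m) - ((j : ℤ) - m)))
    (hNm : ∀ i j, Nm i j = if i = j then Complex.I * ω * ((i : ℤ) - m) else 0)
    (hQm : ∀ i j, Qm i j = q (((i : ℤ) - m) - ((j : ℤ) - m)))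
    (hPm : ∀ i j, Pm i j = p (((i : ℤ) - m) - ((j : ℤ) - m)))
    (hP : (Am - Nm)ᴴ * P + P * (Am - Nm) + Qm = 0) :
    ∀ i j, ((Am - Nm)ᴴ * (P - Pm) + (P - Pm) * (Am - Nm)) i j
      = ∑' r : {r : ℤ // (m : ℤ) < |r|},
          (a (((i : ℤ) - m) - (r : ℤ)) * p ((r : ℤ) - ((j : ℤ) - m))
            + p (((i : ℤ) - m) - (r : ℤ)) * a ((r : ℤ) - ((j : ℤ) - m))) := by
  intro i j
  set I : ℤ := (i : ℤ) - m with hI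
  set J : ℤ := (j : ℤ) - m with hJ
  -- summability of the two product families and their sum
  have hg1 : Summable fun r : ℤ => a (I - r) * p (r - J) :=
    tlc_prodSummable a p ha2 hp2 I J
  have hg2 : Summable fun r : ℤ => p (I - r) * a (r - J) :=
    tlc_prodSummable p a hp2 ha2 I J
  have hg : Summable fun r : ℤ => a (I - r) * p (r - J) + p (I - r) * a (r - J) :=
    hg1.add hg2
  -- entrywise consequence of hP
  have hPe : ((Am - Nm)ᴴ * P + P * (Am - Nm)) i j = -Qm i j := by
    have h0 := congrFun (congrFun hP i) j
    simp only [Matrix.add_apply, Matrix.zero_apply] at h0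
    rw [Matrix.add_apply]
    linear_combination h0
  -- split the Lyapunov operator
  have hsplit : ((Am - Nm)ᴴ * (P - Pm) + (P - Pm) * (Am - Nm)) i j
      = ((Am - Nm)ᴴ * P + P * (Am - Nm)) i j
        - ((Am - Nm)ᴴ * Pm + Pm * (Am - Nm)) i j := by
    simp only [Matrix.mul_sub, Matrix.sub_mul, Matrix.add_apply, Matrix.sub_apply]
    ring
  -- compute the Lyapunov operator applied to the truncated Toeplitz matrix
  have hstar : ∀ k : Fin (2 * m + 1),
      ((Am - Nm)ᴴ) i k = a (I - ((k : ℤ) - m))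
        - (if k = i then -(Complex.I * ω * (((k : ℤ) - m : ℤ) : ℂ)) else 0) := by
    intro k
    rw [Matrix.conjTranspose_apply, Matrix.sub_apply, hAm, hNm]
    rw [star_sub]
    congr 1
    · have := hsym (((k : ℤ) - m) - ((i : ℤ) - m))
      rw [show (-(((k : ℤ) - m) - ((i : ℤ) - m))) = I - ((k : ℤ) - m) by rw [hI]; ring] at this
      exact this
    · rw [apply_ite star]
      split_ifs with hk
      · push_cast
        simp [Complex.ext_iff]
      · simp
  have hMain : ((Am - Nm)ᴴ * Pm + Pm * (Am - Nm)) i j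
      = (∑ k : Fin (2 * m + 1),
          (a (I - ((k : ℤ) - m)) * p (((k : ℤ) - m) - J)
            + p (I - ((k : ℤ) - m)) * a (((k : ℤ) - m) - J)))
        + Complex.I * ω * ((I - J : ℤ) : ℂ) * p (I - J) := by
    rw [Matrix.add_apply, Matrix.mul_apply, Matrix.mul_apply]
    have e1 : ∑ k : Fin (2 * m + 1), ((Am - Nm)ᴴ) i k * Pm k j
        = (∑ k : Fin (2 * m + 1), a (I - ((k : ℤ) - m)) * p (((k : ℤ) - m) - J))
          + Complex.I * ω * ((I : ℤ) : ℂ) * p (I - J) := by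
      have : ∀ k : Fin (2 * m + 1), ((Am - Nm)ᴴ) i k * Pm k j
          = a (I - ((k : ℤ) - m)) * p (((k : ℤ) - m) - J)
            + (if k = i then Complex.I * ω * (((k : ℤ) - m : ℤ) : ℂ) * p (((k : ℤ) - m) - J) else 0) := by
        intro k
        rw [hstar k, hPm]
        simp only [← hI, ← hJ]
        rw [sub_mul, ite_mul, zero_mul]
        split_ifs with hk
        · ring
        · ring
      rw [Finset.sum_congr rfl (fun k _ => this k), Finset.sum_add_distrib,
        Finset.sum_ite_eq' Finset.univ i
          (fun k => Complex.I * ω * (((k : ℤ) - m : ℤ) : ℂ) * p (((k : ℤ) - m) - J))]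
      simp only [Finset.mem_univ, if_true, ← hI, ← hJ]
    have e2 : ∑ k : Fin (2 * m + 1), Pm i k * (Am - Nm) k j
        = (∑ k : Fin (2 * m + 1), p (I - ((k : ℤ) - m)) * a (((k : ℤ) - m) - J))
          - Complex.I * ω * ((J : ℤ) : ℂ) * p (I - J) := by
      have : ∀ k : Fin (2 * m + 1), Pm i k * (Am - Nm) k j
          = p (I - ((k : ℤ) - m)) * a (((k : ℤ) - m) - J)
            - (if k = j then Complex.I * ω * (((k : ℤ) - m : ℤ) : ℂ) * p (I - ((k : ℤ) - m)) else 0) := by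
        intro k
        rw [Matrix.sub_apply, hAm, hNm, hPm]
        simp only [← hI, ← hJ]
        rw [mul_sub, mul_ite, mul_zero]
        split_ifs with hk
        · push_cast
          ring
        · ring
      rw [Finset.sum_congr rfl (fun k _ => this k), Finset.sum_sub_distrib,
        Finset.sum_ite_eq' Finset.univ j
          (fun k => Complex.I * ω * (((k : ℤ) - m : ℤ) : ℂ) * p (I - ((k : ℤ) - m)))]
      simp only [Finset.mem_univ, if_true, ← hI, ← hJ]
    rw [e1, e2, Finset.sum_add_distrib]
    push_cast
    ring
  -- identity from the full (symbol-level) Lyapunov equation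
  have hq : -Qm i j = (∑' K : ℤ, (a (I - K) * p (K - J) + p (I - K) * a (K - J)))
      + Complex.I * ω * ((I - J : ℤ) : ℂ) * p (I - J) := by
    rw [hQm]
    simp only [← hI, ← hJ]
    have h0 := hLyap (I - J)
    rw [Summable.tsum_add hg1 hg2, tlc_reindex1 a p I J, tlc_reindex2 a p I J]
    linear_combination -h0
  -- put everything together
  rw [hsplit, hPe, hMain, hq]
  have htail := tlc_tail m
    (fun r : ℤ => a (I - r) * p (r - J) + p (I - r) * a (r - J)) hg
  rw [htail, ← tlc_finsum m (fun r : ℤ => a (I - r) * p (r - J) + p (I - r) * a (r - J))]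
  ring
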